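/- Let each fᵢ: ℝ^d → ℝ be differentiable, convex and Lᵢ-smooth with L_max = max_i Lᵢ, assume the interpolation regime holds with common minimizer x⋆, set f = (1/n)∑ᵢ fᵢ and M^γ = (1/n)∑ᵢ M_{fᵢ}^γ for γ > 0. Then for all x ∈ ℝ^d: M^γ(x) − M^γ(x⋆) ≥ (1/(1+γL_max)) (f(x) − f(x⋆)). -/

import Mathlib

/-- The Moreau envelope of a real-valued function `f` with parameter `γ`. -/
noncomputable def moreau {d : ℕ} (γ : ℝ) (f : EuclideanSpace ℝ (Fin d) → ℝ)
    (x : EuclideanSpace ℝ (Fin d)) : ℝ :=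
  ⨅ z, (f z + (1 / (2 * γ)) * ‖z - x‖ ^ 2)

open InnerProductSpace Set intervalIntegral

variable {d : ℕ}

local notation "E" => EuclideanSpace ℝ (Fin d)

/-- derivative along a line -/
lemma line_hasDerivAt {f : E → ℝ} {g : E → E} (hg : ∀ p, HasGradientAt f (g p) p)
    (x v : E) (t : ℝ) :
    HasDerivAt (fun s : ℝ => f (x + s • v)) (inner ℝ (g (x + t • v)) v : ℝ) t := by
  have h1 : HasDerivAt (fun s : ℝ => x + s • v) v t := by
    simpa using ((hasDerivAt_id t).smul_const v).const_add x
  have h2 := (hg (x + t • v)).hasFDerivAt.comp_hasDerivAt t h1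
  simp at h2
  exact h2

/-- convexity: first-order lower bound -/
lemma convex_grad_lower {f : E → ℝ} {g : E → E} (hconv : ConvexOn ℝ Set.univ f)
    (hg : ∀ p, HasGradientAt f (g p) p) (x z : E) :
    f x + inner ℝ (g x) (z - x) ≤ f z := by
  set h : ℝ → ℝ := fun t => f (x + t • (z - x)) with hh
  have hconvh : ConvexOn ℝ Set.univ h := by
    have := hconv.comp_affineMap (AffineMap.lineMap x z)
    have he : (f ∘ (AffineMap.lineMap x z : ℝ →ᵃ[ℝ] E)) = h := by
      funext t
      simp [hh, AffineMap.lineMap_apply, add_comm, vsub_eq_sub, vadd_eq_add]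
    rw [he] at this
    simpa using this
  have hd : HasDerivAt h (inner ℝ (g x) (z - x) : ℝ) 0 := by
    have := line_hasDerivAt hg x (z - x) 0
    simpa using this
  have := hconvh.le_slope_of_hasDerivAt (mem_univ (0:ℝ)) (mem_univ (1:ℝ)) one_pos hd
  have hs : slope h 0 1 = f z - f x := by
    rw [slope_def_field]
    simp [hh]
  rw [hs] at this
  linarith [this]

/-- Descent lemma: smoothness upper bound. -/
lemma descent_lemma {f : E → ℝ} {g : E → E} {L : ℝ} (hL : 0 ≤ L)
    (hg : ∀ p, HasGradientAt f (g p) p)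
    (hlip : ∀ a b, ‖g a - g b‖ ≤ L * ‖a - b‖) (x y : E) :
    f y ≤ f x + inner ℝ (g x) (y - x) + L / 2 * ‖y - x‖ ^ 2 := by
  set v := y - x with hv
  have hcontg : Continuous g := by
    refine (LipschitzWith.of_dist_le_mul (K := Real.toNNReal L) ?_).continuous
    intro a b
    rw [dist_eq_norm, dist_eq_norm]
    simpa [Real.coe_toNNReal L hL] using hlip a b
  have hderiv : ∀ t ∈ uIcc (0:ℝ) 1,
      HasDerivAt (fun s : ℝ => f (x + s • v)) (inner ℝ (g (x + t • v)) v : ℝ) t :=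
    fun t _ => line_hasDerivAt hg x v t
  have hcont : Continuous fun t : ℝ => (inner ℝ (g (x + t • v)) v : ℝ) := by
    have hline : Continuous fun t : ℝ => x + t • v :=
      continuous_const.add (continuous_id.smul continuous_const)
    exact (hcontg.comp hline).inner continuous_const
  have hint : IntervalIntegrable (fun t : ℝ => (inner ℝ (g (x + t • v)) v : ℝ))
      MeasureTheory.volume 0 1 := hcont.intervalIntegrable _ _
  have heq := intervalIntegral.integral_eq_sub_of_hasDerivAt hderiv hint
  have hint2 : IntervalIntegrable (fun t : ℝ => (inner ℝ (g x) v : ℝ) + (L * ‖v‖^2) * t)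
      MeasureTheory.volume 0 1 := by
    exact (continuous_const.add (continuous_const.mul continuous_id)).intervalIntegrable _ _
  have hmono : ∫ t in (0:ℝ)..1, (inner ℝ (g (x + t • v)) v : ℝ)
      ≤ ∫ t in (0:ℝ)..1, ((inner ℝ (g x) v : ℝ) + (L * ‖v‖^2) * t) := by
    apply intervalIntegral.integral_mono_on zero_le_one hint hint2
    intro t ht
    have h1 : (inner ℝ (g (x + t • v)) v : ℝ) - inner ℝ (g x) v
        = inner ℝ (g (x + t • v) - g x) v := (inner_sub_left _ _ _).symm
    have h2 : (inner ℝ (g (x + t • v) - g x) v : ℝ) ≤ ‖g (x + t • v) - g x‖ * ‖v‖ :=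
      real_inner_le_norm _ _
    have h3 : ‖g (x + t • v) - g x‖ ≤ L * (t * ‖v‖) := by
      have := hlip (x + t • v) x
      simpa [norm_smul, abs_of_nonneg ht.1] using this
    nlinarith [norm_nonneg v, norm_nonneg (g (x + t • v) - g x)]
  have hval : ∫ t in (0:ℝ)..1, ((inner ℝ (g x) v : ℝ) + (L * ‖v‖^2) * t)
      = inner ℝ (g x) v + L / 2 * ‖v‖^2 := by
    have : ∫ t in (0:ℝ)..1, ((inner ℝ (g x) v : ℝ) + (L * ‖v‖^2) * t)
        = (∫ _t in (0:ℝ)..1, (inner ℝ (g x) v : ℝ)) + ∫ t in (0:ℝ)..1, (L * ‖v‖^2) * t :=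
      intervalIntegral.integral_add intervalIntegrable_const
        ((continuous_const.mul continuous_id).intervalIntegrable _ _)
    rw [this, intervalIntegral.integral_const_mul]
    have hid : ∫ t in (0:ℝ)..1, t = 1/2 := by
      simp [integral_id]
    rw [hid]
    simp
    ring
  rw [hval] at hmono
  have hy1 : x + (1:ℝ) • v = y := by simp [hv]
  have hy0 : x + (0:ℝ) • v = x := by simp
  rw [hy1, hy0] at heq
  linarith [heq ▸ hmono]

/-- PL-type inequality under interpolation. -/
lemma pl_ineq {f : E → ℝ} {g : E → E} {L : ℝ} {xs : E} (hL : 0 < L)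
    (hconv : ConvexOn ℝ Set.univ f)
    (hg : ∀ p, HasGradientAt f (g p) p)
    (hlip : ∀ a b, ‖g a - g b‖ ≤ L * ‖a - b‖) (hmin : g xs = 0) (z : E) :
    ‖g z‖ ^ 2 ≤ 2 * L * (f z - f xs) := by
  set w := g z with hw
  set a := L⁻¹ with ha
  have ha0 : 0 < a := inv_pos.mpr hL
  have haL : a * L = 1 := inv_mul_cancel₀ hL.ne'
  have h1 := descent_lemma hL.le hg hlip z (z - a • w)
  have hsub : (z - a • w) - z = -(a • w) := by abel
  rw [hsub] at h1
  have hi : (inner ℝ w (-(a • w)) : ℝ) = -(a * ‖w‖^2) := by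
    rw [inner_neg_right, real_inner_smul_right, real_inner_self_eq_norm_sq]
  have hn : ‖-(a • w)‖ ^ 2 = a^2 * ‖w‖^2 := by
    rw [norm_neg, norm_smul, mul_pow]
    simp [abs_of_nonneg ha0.le]
  rw [hi, hn] at h1
  have h2 := convex_grad_lower hconv hg xs (z - a • w)
  rw [hmin] at h2
  simp only [inner_zero_left, add_zero] at h2
  have e1 : L / 2 * (a ^ 2 * ‖w‖ ^ 2) = a / 2 * ‖w‖ ^ 2 := by
    have : L * a ^ 2 = a := by
      calc L * a ^ 2 = (a * L) * a := by ring
        _ = a := by rw [haL]; ring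
    calc L / 2 * (a ^ 2 * ‖w‖ ^ 2) = (L * a ^ 2) / 2 * ‖w‖ ^ 2 := by ring
      _ = a / 2 * ‖w‖ ^ 2 := by rw [this]
  rw [e1] at h1
  have h6 : a / 2 * ‖w‖ ^ 2 ≤ f z - f xs := by linarith
  have h7 := mul_le_mul_of_nonneg_left h6 (by positivity : (0:ℝ) ≤ 2 * L)
  have h8 : 2 * L * (a / 2 * ‖w‖ ^ 2) = ‖w‖ ^ 2 := by
    calc 2 * L * (a / 2 * ‖w‖ ^ 2) = (a * L) * ‖w‖ ^ 2 := by ring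
      _ = ‖w‖ ^ 2 := by rw [haL]; ring
  linarith [h8 ▸ h7]

/-- Pointwise lower bound on the Moreau objective. -/
lemma env_bound {f : E → ℝ} {g : E → E} {L γ Lmax : ℝ} {xs : E}
    (hγ : 0 < γ) (hL : 0 < L) (hLm : L ≤ Lmax)
    (hconv : ConvexOn ℝ Set.univ f)
    (hg : ∀ p, HasGradientAt f (g p) p)
    (hlip : ∀ a b, ‖g a - g b‖ ≤ L * ‖a - b‖) (hmin : g xs = 0) (x z : E) :
    f xs + (1 / (1 + γ * Lmax)) * (f x - f xs) ≤ f z + (1 / (2 * γ)) * ‖z - x‖ ^ 2 := by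
  set A := f z - f xs with hA'
  set B := f x - f xs with hB'
  set G := ‖g z‖ with hG'
  set r := ‖x - z‖ with hr'
  have hzx : ‖z - x‖ = r := norm_sub_rev z x
  have hA : 0 ≤ A := by
    have := convex_grad_lower hconv hg xs z
    rw [hmin] at this
    simp only [inner_zero_left, add_zero] at this
    simp [hA']; linarith
  have hB : B ≤ A + G * r + L / 2 * r ^ 2 := by
    have h1 := descent_lemma hL.le hg hlip z x
    have h2 : (inner ℝ (g z) (x - z) : ℝ) ≤ G * r := real_inner_le_norm _ _
    simp [hB', hA']; nlinarith
  have hPL : G ^ 2 ≤ 2 * L * A := pl_ineq hL hconv hg hlip hmin z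
  have hG : 0 ≤ G := norm_nonneg _
  have hr : 0 ≤ r := norm_nonneg _
  have h1 : 0 < 1 + γ * Lmax := by nlinarith [mul_pos hγ hL]
  rw [hzx]
  -- reduce to: (1/(1+γLmax)) * B ≤ A + (1/(2γ)) * r²
  have main2 : 2 * γ * B ≤ (2 * γ * A + r ^ 2) * (1 + γ * Lmax) := by
    have e1 : 2 * γ * B ≤ 2 * γ * A + 2 * γ * (G * r) + γ * L * r ^ 2 := by nlinarith [hB]
    have e2 : 2 * γ * (G * r) ≤ γ ^ 2 * G ^ 2 + r ^ 2 := by nlinarith [sq_nonneg (γ * G - r)]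
    have e3 : γ ^ 2 * G ^ 2 ≤ γ ^ 2 * (2 * L * A) := mul_le_mul_of_nonneg_left hPL (sq_nonneg γ)
    have e4 : L * (γ ^ 2 * A) ≤ Lmax * (γ ^ 2 * A) :=
      mul_le_mul_of_nonneg_right hLm (mul_nonneg (sq_nonneg γ) hA)
    have e5 : L * (γ * r ^ 2) ≤ Lmax * (γ * r ^ 2) :=
      mul_le_mul_of_nonneg_right hLm (mul_nonneg hγ.le (sq_nonneg r))
    nlinarith [e1, e2, e3, e4, e5]
  have main : (1 / (1 + γ * Lmax)) * B ≤ A + (1 / (2 * γ)) * r ^ 2 := by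
    rw [div_mul_eq_mul_div, div_le_iff₀ h1, one_mul,
      ← mul_le_mul_iff_right₀ (by positivity : (0:ℝ) < 2 * γ)]
    have he : 2 * γ * ((A + 1 / (2 * γ) * r ^ 2) * (1 + γ * Lmax))
        = (2 * γ * A + r ^ 2) * (1 + γ * Lmax) := by
      have h2γ : (2 * γ) * (1 / (2 * γ)) = 1 := by field_simp
      calc 2 * γ * ((A + 1 / (2 * γ) * r ^ 2) * (1 + γ * Lmax))
          = (2 * γ * A + ((2 * γ) * (1 / (2 * γ))) * r ^ 2) * (1 + γ * Lmax) := by ring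
        _ = (2 * γ * A + r ^ 2) * (1 + γ * Lmax) := by rw [h2γ]; ring
    rw [he]
    exact main2
  linarith

/-- per-function Moreau inequality -/
lemma moreau_key {f : E → ℝ} {g : E → E} {L γ Lmax : ℝ} {xs : E}
    (hγ : 0 < γ) (hL : 0 < L) (hLm : L ≤ Lmax)
    (hconv : ConvexOn ℝ Set.univ f)
    (hg : ∀ p, HasGradientAt f (g p) p)
    (hlip : ∀ a b, ‖g a - g b‖ ≤ L * ‖a - b‖) (hmin : g xs = 0) (x : E) :
    (1 / (1 + γ * Lmax)) * (f x - f xs) ≤ moreau γ f x - moreau γ f xs := by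
  have hfl : ∀ z, f xs ≤ f z := by
    intro z
    have := convex_grad_lower hconv hg xs z
    rw [hmin] at this
    simpa using this
  have hbdd : ∀ y : E, BddBelow (Set.range fun z => f z + 1 / (2 * γ) * ‖z - y‖ ^ 2) := by
    intro y
    refine ⟨f xs, ?_⟩
    rintro _ ⟨z, rfl⟩
    have : 0 ≤ 1 / (2 * γ) * ‖z - y‖ ^ 2 := by positivity
    linarith [hfl z]
  have hxs_le : moreau γ f xs ≤ f xs := by
    have := ciInf_le (hbdd xs) xs
    simpa [moreau] using this
  have hx_ge : f xs + (1 / (1 + γ * Lmax)) * (f x - f xs) ≤ moreau γ f x := by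
    refine le_ciInf fun z => ?_
    exact env_bound hγ hL hLm hconv hg hlip hmin x z
  linarith

/-- Let each `fᵢ : ℝ^d → ℝ` be differentiable, convex and `Lᵢ`-smooth with
`L_max = max_i Lᵢ`, assume the interpolation regime holds with common minimizer `x⋆`,
set `f = (1/n)∑ᵢ fᵢ` and `M^γ = (1/n)∑ᵢ M_{fᵢ}^γ` for `γ > 0`. Then for all `x`:
`M^γ(x) − M^γ(x⋆) ≥ (1/(1+γL_max)) (f(x) − f(x⋆))`. -/
theorem stmt11 {d n : ℕ} (hn : 0 < n) (γ : ℝ) (hγ : 0 < γ)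
    (f : Fin n → EuclideanSpace ℝ (Fin d) → ℝ)
    (g : Fin n → EuclideanSpace ℝ (Fin d) → EuclideanSpace ℝ (Fin d))
    (L : Fin n → ℝ) (Lmax : ℝ) (hL : ∀ i, 0 < L i)
    (hLmax : ∀ i, L i ≤ Lmax) (hLmax' : ∃ i, L i = Lmax)
    (hconv : ∀ i, ConvexOn ℝ Set.univ (f i))
    (hgrad : ∀ i x, HasGradientAt (f i) (g i x) x)
    (hlip : ∀ i x y, ‖g i x - g i y‖ ≤ L i * ‖x - y‖)
    (xs : EuclideanSpace ℝ (Fin d)) (hint : ∀ i, g i xs = 0) :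
    ∀ x, (1 / (n : ℝ)) * ∑ i, moreau γ (f i) x - (1 / (n : ℝ)) * ∑ i, moreau γ (f i) xs ≥
      (1 / (1 + γ * Lmax)) *
        ((1 / (n : ℝ)) * ∑ i, f i x - (1 / (n : ℝ)) * ∑ i, f i xs) := by
  intro x
  rw [ge_iff_le]
  have key : ∀ i, (1 / (1 + γ * Lmax)) * (f i x - f i xs)
      ≤ moreau γ (f i) x - moreau γ (f i) xs :=
    fun i => moreau_key hγ (hL i) (hLmax i) (hconv i) (hgrad i) (fun a b => hlip i a b)
      (hint i) x
  have e1 : (1 / (1 + γ * Lmax)) *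
      ((1 / (n : ℝ)) * ∑ i, f i x - (1 / (n : ℝ)) * ∑ i, f i xs)
      = (1 / (n : ℝ)) * ∑ i, (1 / (1 + γ * Lmax)) * (f i x - f i xs) := by
    simp only [Finset.mul_sum, mul_sub]
    rw [← Finset.sum_sub_distrib]
    exact Finset.sum_congr rfl fun i _ => by ring
  have e2 : (1 / (n : ℝ)) * ∑ i, moreau γ (f i) x - (1 / (n : ℝ)) * ∑ i, moreau γ (f i) xs
      = (1 / (n : ℝ)) * ∑ i, (moreau γ (f i) x - moreau γ (f i) xs) := by
    simp only [Finset.mul_sum]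
    rw [← Finset.sum_sub_distrib]
    exact Finset.sum_congr rfl fun i _ => by ring
  rw [e1, e2]
  apply mul_le_mul_of_nonneg_left (Finset.sum_le_sum fun i _ => key i)
  positivity
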